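/- Let k be a field and A a finite-dimensional k-algebra with dominant dimension at least 2, and let V be a faithful projective-injective finitely generated right A-module. Set P = Hom_A(V, A), the left A-module of right A-linear maps from V to A (which is a finitely generated projective left A-module). Then (A, P) is a cover of End_A(P)^op, and End_A(P)^op ≅ End_A(V) as k-algebras (endomorphisms of V as a right A-module), so (A, Hom_A(V, A)) is a cover of End_A(V). -/

import Mathlib

universe u

open MulOpposite

set_option synthInstance.maxHeartbeats 400000
set_option maxHeartbeats 1000000

/-- `(A, P)` is a cover of `B = End_A(P)ᵒᵖ`: the Schur functor `Hom_A(P, -)` is fully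
faithful on finitely generated projective `A`-modules.  Here a map
`Φ : Hom_A(P, M) → Hom_A(P, N)` is `B`-linear iff it is additive and commutes with
precomposition by every `A`-endomorphism of `P`, so the condition says that for all
finitely generated projective `M`, `N` the natural map
`Hom_A(M, N) → Hom_B(Hom_A(P, M), Hom_A(P, N))`, `g ↦ (f ↦ g ∘ f)`, is bijective. -/
def IsCover (A : Type u) [Ring A] (P : Type u) [AddCommGroup P] [Module A P] : Prop :=
  ∀ (M N : Type u) [AddCommGroup M] [Module A M] [AddCommGroup N] [Module A N],
    Module.Finite A M → Module.Projective A M →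
    Module.Finite A N → Module.Projective A N →
    (Function.Injective fun (g : M →ₗ[A] N) => fun f : P →ₗ[A] M => g ∘ₗ f) ∧
    (∀ Φ : (P →ₗ[A] M) → (P →ₗ[A] N),
      (∀ f₁ f₂, Φ (f₁ + f₂) = Φ f₁ + Φ f₂) →
      (∀ (f : P →ₗ[A] M) (g : P →ₗ[A] P), Φ (f ∘ₗ g) = Φ f ∘ₗ g) →
      ∃ g : M →ₗ[A] N, ∀ f, Φ f = g ∘ₗ f)

/-- `domdim A ≥ 2`, formulated with right `A`-modules (i.e. left `Aᵐᵒᵖ`-modules):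
there is an exact sequence `0 → A → I₀ → I₁` of right `A`-modules with `I₀` and `I₁`
both projective and injective. -/
def DomdimGeTwoRight (A : Type u) [Ring A] : Prop :=
  ∃ (I₀ : Type u) (_ : AddCommGroup I₀) (_ : Module Aᵐᵒᵖ I₀)
    (I₁ : Type u) (_ : AddCommGroup I₁) (_ : Module Aᵐᵒᵖ I₁),
    Module.Projective Aᵐᵒᵖ I₀ ∧ Module.Injective Aᵐᵒᵖ I₀ ∧
    Module.Projective Aᵐᵒᵖ I₁ ∧ Module.Injective Aᵐᵒᵖ I₁ ∧
    ∃ (f : A →ₗ[Aᵐᵒᵖ] I₀) (g : I₀ →ₗ[Aᵐᵒᵖ] I₁),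
      Function.Injective f ∧ LinearMap.range f = LinearMap.ker g

section
variable {R : Type u} [Ring R] {M : Type u} [AddCommGroup M] [Module R M]

/-- sum map -/
def piTotal {n : ℕ} (s : Fin n → M) : (Fin n → R) →ₗ[R] M where
  toFun x := ∑ i, x i • s i
  map_add' x y := by simp [add_smul, Finset.sum_add_distrib]
  map_smul' c x := by simp [Finset.smul_sum, smul_smul]

lemma exists_presentation (hfin : Module.Finite R M) (hproj : Module.Projective R M) :
    ∃ (n : ℕ) (π : (Fin n → R) →ₗ[R] M) (σ : M →ₗ[R] (Fin n → R)), ∀ m, π (σ m) = m := by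
  classical
  obtain ⟨n, s, hs⟩ := Module.Finite.exists_fin (R := R) (M := M)
  have hsurj : Function.Surjective (piTotal (R := R) s) := by
    rw [← LinearMap.range_eq_top, ← top_le_iff, ← hs, Submodule.span_le]
    rintro _ ⟨i, rfl⟩
    exact ⟨Pi.single i 1, by simp [piTotal, Pi.single_apply, ite_smul]⟩
  haveI := hproj
  obtain ⟨σ, hσ⟩ := Module.projective_lifting_property (piTotal (R := R) s) LinearMap.id hsurj
  exact ⟨n, piTotal s, σ, fun m => by
    have := LinearMap.congr_fun hσ m; simpa using this⟩
end
section
variable {A : Type u} [Ring A]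

def opL : A →ₗ[Aᵐᵒᵖ] Aᵐᵒᵖ where
  toFun := op
  map_add' _ _ := rfl
  map_smul' _ _ := rfl

def unopL : Aᵐᵒᵖ →ₗ[Aᵐᵒᵖ] A where
  toFun := unop
  map_add' _ _ := rfl
  map_smul' _ _ := rfl

variable {V : Type u} [AddCommGroup V] [Module Aᵐᵒᵖ V]

lemma exists_presentationOp [Module.Finite Aᵐᵒᵖ V] (hproj : Module.Projective Aᵐᵒᵖ V) :
    ∃ (n : ℕ) (π : (Fin n → A) →ₗ[Aᵐᵒᵖ] V) (σ : V →ₗ[Aᵐᵒᵖ] (Fin n → A)), ∀ v, π (σ v) = v := by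
  obtain ⟨n, π, σ, hπσ⟩ := exists_presentation (R := Aᵐᵒᵖ) inferInstance hproj
  refine ⟨n, π ∘ₗ LinearMap.pi (fun i => opL ∘ₗ LinearMap.proj i),
    LinearMap.pi (fun i => unopL ∘ₗ LinearMap.proj i) ∘ₗ σ, fun v => ?_⟩
  have h2 : (LinearMap.pi fun i => opL ∘ₗ LinearMap.proj i)
      ((LinearMap.pi fun i => unopL ∘ₗ LinearMap.proj i) (σ v)) = σ v := funext fun _ => rfl
  show π ((LinearMap.pi fun i => opL ∘ₗ LinearMap.proj i)
      ((LinearMap.pi fun i => unopL ∘ₗ LinearMap.proj i) (σ v))) = v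
  rw [h2]; exact hπσ v
end

section
variable {A V : Type u} [Ring A] [AddCommGroup V] [Module Aᵐᵒᵖ V]

/-- evaluation at `v` as an `A`-linear map on `Hom(V, A)`. -/
def evA (v : V) : (V →ₗ[Aᵐᵒᵖ] A) →ₗ[A] A where
  toFun p := p v
  map_add' p q := rfl
  map_smul' a p := rfl

@[simp] lemma evA_apply (v : V) (p : V →ₗ[Aᵐᵒᵖ] A) : evA v p = p v := rfl

/-- right multiplication by `v`, as a right-module map `A → V`. -/
def rmulV (v : V) : A →ₗ[Aᵐᵒᵖ] V where
  toFun c := op c • v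
  map_add' a b := by simp [op_add, add_smul]
  map_smul' c a := by
    simp only [RingHom.id_apply]
    rw [MulOpposite.smul_eq_mul_unop, op_mul, op_unop, mul_smul]

@[simp] lemma rmulV_apply (v : V) (c : A) : rmulV v c = op c • v := rfl

/-- precomposition with `h`, as an `A`-linear endomorphism of `Hom(V, A)`. -/
def dualM (h : V →ₗ[Aᵐᵒᵖ] V) : (V →ₗ[Aᵐᵒᵖ] A) →ₗ[A] (V →ₗ[Aᵐᵒᵖ] A) where
  toFun p := p ∘ₗ h
  map_add' p q := by ext v; rfl
  map_smul' a p := by ext v; rfl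

@[simp] lemma dualM_apply (h : V →ₗ[Aᵐᵒᵖ] V) (p : V →ₗ[Aᵐᵒᵖ] A) : dualM h p = p ∘ₗ h := rfl

lemma ev_injective [Module.Finite Aᵐᵒᵖ V] (hproj : Module.Projective Aᵐᵒᵖ V)
    (v : V) (hv : ∀ p : V →ₗ[Aᵐᵒᵖ] A, p v = 0) : v = 0 := by
  obtain ⟨n, π, σ, hπσ⟩ := exists_presentationOp hproj
  have h0 : σ v = 0 := funext fun i =>
    hv ((LinearMap.proj i : (Fin _ → A) →ₗ[Aᵐᵒᵖ] A) ∘ₗ σ)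
  rw [← hπσ v, h0, map_zero]

lemma single_eq_op_smul {n : ℕ} (i : Fin n) (c : A) :
    Pi.single (M := fun _ => A) i c = op c • Pi.single i (1 : A) := by
  funext j
  simp only [Pi.smul_apply, MulOpposite.smul_eq_mul_unop, unop_op, Pi.single_apply]
  split <;> simp

lemma pi_decomp {n : ℕ} {W : Type u} [AddCommGroup W] [Module Aᵐᵒᵖ W]
    (q : (Fin n → A) →ₗ[Aᵐᵒᵖ] W) (x : Fin n → A) :
    q x = ∑ i, op (x i) • q (Pi.single i 1) := by
  conv_lhs => rw [← Finset.univ_sum_single x]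
  rw [map_sum]
  exact Finset.sum_congr rfl fun i _ => by rw [single_eq_op_smul, map_smul]

lemma ev_surjective [Module.Finite Aᵐᵒᵖ V] (hproj : Module.Projective Aᵐᵒᵖ V)
    (F : (V →ₗ[Aᵐᵒᵖ] A) →ₗ[A] A) : ∃ v : V, ∀ p : V →ₗ[Aᵐᵒᵖ] A, p v = F p := by
  obtain ⟨n, π, σ, hπσ⟩ := exists_presentationOp hproj
  set w : Fin n → V := fun i => π (Pi.single i 1) with hwdef
  set pc : Fin n → (V →ₗ[Aᵐᵒᵖ] A) := fun i => LinearMap.proj i ∘ₗ σ with hpcdef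
  refine ⟨π (fun i => F (pc i)), fun p => ?_⟩
  have hq : ∀ x : Fin n → A, p (π x) = ∑ i, p (w i) * x i := by
    intro x
    rw [show p (π x) = (p ∘ₗ π) x from rfl, pi_decomp (p ∘ₗ π) x]
    exact Finset.sum_congr rfl fun i _ => by
      rw [MulOpposite.smul_eq_mul_unop, unop_op]; rfl
  have hp : ∀ x : V, p x = ∑ i, p (w i) * pc i x := by
    intro x
    conv_lhs => rw [← hπσ x]
    rw [hq (σ x)]
    rfl
  have hsum : (∑ i, p (w i) • pc i) = p := by
    ext x
    simp only [LinearMap.sum_apply, LinearMap.smul_apply, smul_eq_mul]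
    exact (hp x).symm
  rw [hq (fun i => F (pc i))]
  calc ∑ i, p (w i) * F (pc i) = ∑ i, F (p (w i) • pc i) :=
        Finset.sum_congr rfl fun i _ => by rw [map_smul, smul_eq_mul]
    _ = F (∑ i, p (w i) • pc i) := (map_sum F _ _).symm
    _ = F p := by rw [hsum]
end
section
variable {A V : Type u} [Ring A] [AddCommGroup V] [Module Aᵐᵒᵖ V]

lemma sep_of_projective {X : Type u} [AddCommGroup X] [Module Aᵐᵒᵖ X]
    (hfaithful : ∀ a : A, (∀ v : V, op a • v = 0) → a = 0)
    (hX : Module.Projective Aᵐᵒᵖ X)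
    (y : X) (hy : ∀ s : X →ₗ[Aᵐᵒᵖ] V, s y = 0) : y = 0 := by
  obtain ⟨sX, hsX⟩ := Module.projective_def.mp hX
  by_contra hy0
  have h1 : sX y ≠ 0 := fun h => hy0 (by rw [← hsX y, h, map_zero])
  obtain ⟨idx, hidx⟩ : ∃ idx, sX y idx ≠ 0 := by
    by_contra h
    push_neg at h
    exact h1 (Finsupp.ext h)
  have ha : unop (sX y idx) ≠ 0 := fun h => hidx (by rw [← op_unop (sX y idx), h, op_zero])
  obtain ⟨v, hv⟩ : ∃ v : V, op (unop (sX y idx)) • v ≠ 0 := by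
    by_contra h
    push_neg at h
    exact ha (hfaithful _ h)
  have := hy (LinearMap.toSpanSingleton Aᵐᵒᵖ V v ∘ₗ Finsupp.lapply idx ∘ₗ sX)
  simp only [LinearMap.comp_apply, Finsupp.lapply_apply, LinearMap.toSpanSingleton_apply] at this
  rw [op_unop] at hv
  exact hv this

lemma injective_pi {n : ℕ} (hinj : Module.Injective Aᵐᵒᵖ V) :
    Module.Injective Aᵐᵒᵖ (Fin n → V) := by
  constructor
  intro X Y _ _ _ _ i hi g
  choose h hh using fun j => hinj.out i hi ((LinearMap.proj j : (Fin n → V) →ₗ[Aᵐᵒᵖ] V) ∘ₗ g)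
  exact ⟨LinearMap.pi h, fun x => funext fun j => hh j x⟩

end

lemma exists_faithful_tuple (k : Type u) {A V : Type u} [Field k] [Ring A] [Algebra k A]
    [FiniteDimensional k A]
    [AddCommGroup V] [Module Aᵐᵒᵖ V] [Module k V] [IsScalarTower k Aᵐᵒᵖ V]
    (hfaithful : ∀ a : A, (∀ v : V, op a • v = 0) → a = 0) :
    ∃ (n : ℕ) (w : Fin n → V), ∀ a : A, (∀ i, op a • w i = 0) → a = 0 := by
  classical
  let ρ : V → (A →ₗ[k] V) := fun v =>
    { toFun := fun a => op a • v
      map_add' := fun a b => by simp [op_add, add_smul]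
      map_smul' := fun c a => by
        simp only [RingHom.id_apply]
        rw [MulOpposite.op_smul, smul_assoc] }
  let S : Set (Submodule k A) := {W | ∃ s : Finset V, W = s.inf fun v => LinearMap.ker (ρ v)}
  obtain ⟨W, hWS, hmin⟩ := IsArtinian.set_has_minimal S ⟨⊤, ∅, by simp⟩
  obtain ⟨s, rfl⟩ := hWS
  have hbot : (s.inf fun v => LinearMap.ker (ρ v)) = ⊥ := by
    by_contra hW
    obtain ⟨a, haW, ha0⟩ := Submodule.exists_mem_ne_zero_of_ne_bot hW
    obtain ⟨v, hv⟩ : ∃ v : V, op a • v ≠ 0 := by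
      by_contra h; push_neg at h; exact ha0 (hfaithful _ h)
    have hlt : ((insert v s).inf fun v => LinearMap.ker (ρ v)) <
        (s.inf fun v => LinearMap.ker (ρ v)) := by
      rw [Finset.inf_insert]
      refine lt_of_le_of_ne inf_le_right fun h => ?_
      have : a ∈ LinearMap.ker (ρ v) ⊓ s.inf fun v => LinearMap.ker (ρ v) := by rw [h]; exact haW
      exact hv this.1
    exact hmin _ ⟨insert v s, rfl⟩ hlt
  refine ⟨s.card, fun i => (s.equivFin.symm i : V), fun a ha => ?_⟩
  have : a ∈ (s.inf fun v => LinearMap.ker (ρ v)) := by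
    rw [Finset.inf_eq_iInf]
    simp only [Submodule.mem_iInf]
    intro v hv
    have := ha (s.equivFin ⟨v, hv⟩)
    simpa [Equiv.symm_apply_apply, ρ] using this
  rw [hbot] at this
  simpa using this
section
lemma dcp (k : Type u) {A V : Type u} [Field k] [Ring A] [Algebra k A] [FiniteDimensional k A]
    [AddCommGroup V] [Module Aᵐᵒᵖ V] [Module k V] [IsScalarTower k Aᵐᵒᵖ V]
    (hfaithful : ∀ a : A, (∀ v : V, op a • v = 0) → a = 0)
    (hinj : Module.Injective Aᵐᵒᵖ V) (hdom : DomdimGeTwoRight A)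
    (φ : V →+ V)
    (hcomm : ∀ (h : V →ₗ[Aᵐᵒᵖ] V) (v : V), φ (h v) = h (φ v)) :
    ∃ a : A, ∀ v : V, φ v = op a • v := by
  classical
  obtain ⟨n, w, hw⟩ := exists_faithful_tuple k (V := V) hfaithful
  -- the faithful embedding of A into V^n
  set u : A →ₗ[Aᵐᵒᵖ] (Fin n → V) := LinearMap.pi (fun i => rmulV (w i)) with hu
  have hu_apply : ∀ (a : A) (i : Fin n), u a i = op a • w i := fun a i => rfl
  have hu_inj : Function.Injective u := by
    intro a b hab
    have h1 : ∀ i, op (a - b) • w i = 0 := by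
      intro i
      have := congrFun hab i
      rw [hu_apply, hu_apply] at this
      rw [op_sub, sub_smul, this, sub_self]
    have := hw _ h1
    exact sub_eq_zero.mp this
  -- φ acting diagonally on V^n
  set Φn : (Fin n → V) →+ (Fin n → V) :=
    AddMonoidHom.mk' (fun x i => φ (x i)) (by intro x y; funext i; simp) with hΦn
  have hΦn_apply : ∀ (x : Fin n → V) (i : Fin n), Φn x i = φ (x i) := fun x i => rfl
  have rowA : ∀ (ψ : (Fin n → V) →ₗ[Aᵐᵒᵖ] V) (x : Fin n → V), φ (ψ x) = ψ (Φn x) := by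
    intro ψ x
    conv_lhs => rw [← Finset.univ_sum_single x]
    rw [map_sum, map_sum]
    have hterm : ∀ i : Fin n, φ (ψ (Pi.single i (x i))) = ψ (Pi.single i (φ (x i))) := by
      intro i
      have := hcomm (ψ ∘ₗ LinearMap.single Aᵐᵒᵖ (fun _ => V) i) (x i)
      simpa using this
    rw [Finset.sum_congr rfl fun i _ => hterm i]
    rw [← map_sum]
    congr 1
    exact Finset.univ_sum_single (Φn x)
  have rowB : ∀ (E : (Fin n → V) →ₗ[Aᵐᵒᵖ] (Fin n → V)) (y : Fin n → V),
      Φn (E y) = E (Φn y) := by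
    intro E y
    funext j
    have := rowA ((LinearMap.proj j : (Fin n → V) →ₗ[Aᵐᵒᵖ] V) ∘ₗ E) y
    simpa [hΦn_apply] using this
  obtain ⟨I0, _, _, I1, _, _, hI0p, hI0i, hI1p, hI1i, f, g, hfinj, hexact⟩ := hdom
  obtain ⟨F, hF⟩ := hI0i.out u hu_inj f
  obtain ⟨U, hU⟩ := (injective_pi (n := n) hinj).out f hfinj u
  set e : (Fin n → V) →ₗ[Aᵐᵒᵖ] (Fin n → V) := U ∘ₗ F with he
  set x : Fin n → V := Φn (u 1) with hx
  have hex : e x = x := by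
    rw [hx, ← rowB e (u 1)]
    have : e (u 1) = u 1 := by rw [he, LinearMap.comp_apply, hF, hU]
    rw [this]
  have hgf : ∀ a : A, g (f a) = 0 := by
    intro a
    have : f a ∈ LinearMap.ker g := by rw [← hexact]; exact ⟨a, rfl⟩
    exact this
  have hgFx : g (F x) = 0 := by
    apply sep_of_projective (V := V) hfaithful hI1p
    intro s
    have h1 := rowA ((s ∘ₗ g) ∘ₗ F) (u 1)
    rw [← hx] at h1
    have h2 : ((s ∘ₗ g) ∘ₗ F) (u 1) = 0 := by
      simp only [LinearMap.comp_apply, hF, hgf, map_zero]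
    rw [h2, map_zero] at h1
    simpa using h1.symm
  obtain ⟨b, hb⟩ : ∃ b, f b = F x := by
    have : F x ∈ LinearMap.ker g := hgFx
    rw [← hexact] at this
    exact this
  have hxb : x = u b := by
    rw [← hex, he, LinearMap.comp_apply, ← hb, hU]
  refine ⟨b, fun v => ?_⟩
  obtain ⟨t, ht⟩ := hinj.out u hu_inj (rmulV v)
  have h1 := rowA t (u 1)
  rw [← hx, hxb, ht, ht] at h1
  simpa using h1
end
section
lemma coreSurj (k : Type u) {A V : Type u} [Field k] [Ring A] [Algebra k A]
    [FiniteDimensional k A]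
    [AddCommGroup V] [Module Aᵐᵒᵖ V] [Module k V] [IsScalarTower k Aᵐᵒᵖ V]
    [Module.Finite Aᵐᵒᵖ V]
    (hfaithful : ∀ a : A, (∀ v : V, op a • v = 0) → a = 0)
    (hproj : Module.Projective Aᵐᵒᵖ V) (hinj : Module.Injective Aᵐᵒᵖ V)
    (hdom : DomdimGeTwoRight A)
    (Φ : ((V →ₗ[Aᵐᵒᵖ] A) →ₗ[A] A) → ((V →ₗ[Aᵐᵒᵖ] A) →ₗ[A] A))
    (hadd : ∀ f₁ f₂, Φ (f₁ + f₂) = Φ f₁ + Φ f₂)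
    (hcomp : ∀ (f : (V →ₗ[Aᵐᵒᵖ] A) →ₗ[A] A) (g : (V →ₗ[Aᵐᵒᵖ] A) →ₗ[A] (V →ₗ[Aᵐᵒᵖ] A)),
      Φ (f ∘ₗ g) = Φ f ∘ₗ g) :
    ∃ a : A, ∀ f : (V →ₗ[Aᵐᵒᵖ] A) →ₗ[A] A,
      Φ f = LinearMap.toSpanSingleton A A a ∘ₗ f := by
  classical
  -- the evaluation additive equivalence E : V ≃+ Hom_A(P, A)
  have evadd : ∀ v v' : V, evA (A := A) (v + v') = evA v + evA v' := by
    intro v v'; ext p; simp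
  set evH : V →+ ((V →ₗ[Aᵐᵒᵖ] A) →ₗ[A] A) := AddMonoidHom.mk' (evA (A := A)) evadd with hevH
  have hbij : Function.Bijective evH := by
    constructor
    · intro v v' hvv'
      have h0 : ∀ p : V →ₗ[Aᵐᵒᵖ] A, p (v - v') = 0 := by
        intro p
        have := LinearMap.congr_fun hvv' p
        simp only [hevH, AddMonoidHom.mk'_apply, evA_apply] at this
        rw [map_sub, this, sub_self]
      have := ev_injective hproj _ h0
      exact sub_eq_zero.mp this
    · intro F
      obtain ⟨v, hv⟩ := ev_surjective hproj F
      exact ⟨v, by ext p; exact hv p⟩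
  set E : V ≃+ ((V →ₗ[Aᵐᵒᵖ] A) →ₗ[A] A) := AddEquiv.ofBijective evH hbij with hE
  have hEapp : ∀ (v : V) (p : V →ₗ[Aᵐᵒᵖ] A), E v p = p v := fun v p => rfl
  have hEsymm : ∀ (F : (V →ₗ[Aᵐᵒᵖ] A) →ₗ[A] A) (p : V →ₗ[Aᵐᵒᵖ] A), p (E.symm F) = F p := by
    intro F p
    rw [← hEapp, E.apply_symm_apply]
  -- transport Φ to an additive endomorphism of V
  set ΦH : ((V →ₗ[Aᵐᵒᵖ] A) →ₗ[A] A) →+ ((V →ₗ[Aᵐᵒᵖ] A) →ₗ[A] A) :=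
    AddMonoidHom.mk' Φ hadd with hΦH
  set φ : V →+ V :=
    (E.symm.toAddMonoidHom.comp ΦH).comp E.toAddMonoidHom with hφ
  have hφapp : ∀ v, φ v = E.symm (Φ (E v)) := fun v => rfl
  have hEdual : ∀ (h : V →ₗ[Aᵐᵒᵖ] V) (v : V), E (h v) = E v ∘ₗ dualM h := by
    intro h v; ext p; rfl
  have hφcomm : ∀ (h : V →ₗ[Aᵐᵒᵖ] V) (v : V), φ (h v) = h (φ v) := by
    intro h v
    apply E.injective
    rw [hφapp, E.apply_symm_apply, hEdual, hcomp, hEdual]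
    congr 1
    rw [hφapp, E.apply_symm_apply]
  obtain ⟨a, ha⟩ := dcp k hfaithful hinj hdom φ hφcomm
  refine ⟨a, fun f => ?_⟩
  have h1 : Φ f = E (φ (E.symm f)) := by
    rw [hφapp, E.apply_symm_apply, E.apply_symm_apply]
  rw [h1, ha]
  ext p
  rw [hEapp, map_smul]
  simp only [LinearMap.comp_apply, LinearMap.toSpanSingleton_apply,
    MulOpposite.smul_eq_mul_unop, unop_op, smul_eq_mul]
  rw [hEsymm]
end

/-- If `A` has dominant dimension at least `2` and `V` is a faithful projective-injective
finitely generated right `A`-module, then `(A, Hom_A(V, A))` is a cover of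
`End_A(Hom_A(V, A))ᵒᵖ`, and `End_A(Hom_A(V, A))ᵒᵖ ≅ End_A(V)` as `k`-algebras, so
`(A, Hom_A(V, A))` is a cover of `End_A(V)`. -/
theorem isCover_of_domdimGeTwo
    (k A V : Type u) [Field k] [Ring A] [Algebra k A] [FiniteDimensional k A]
    [AddCommGroup V] [Module Aᵐᵒᵖ V] [Module k V] [IsScalarTower k Aᵐᵒᵖ V]
    [Module.Finite Aᵐᵒᵖ V]
    (hfaithful : ∀ a : A, (∀ v : V, op a • v = 0) → a = 0)
    (hproj : Module.Projective Aᵐᵒᵖ V) (hinj : Module.Injective Aᵐᵒᵖ V)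
    (hdom : DomdimGeTwoRight A) :
    IsCover A (V →ₗ[Aᵐᵒᵖ] A) ∧
    ∃ e : (Module.End A (V →ₗ[Aᵐᵒᵖ] A))ᵐᵒᵖ ≃+* Module.End Aᵐᵒᵖ V,
      ∀ (c : k) (g : Module.End A (V →ₗ[Aᵐᵒᵖ] A)), e (op (c • g)) = c • e (op g) := by
  classical
  constructor
  · -- the cover property
    intro M N _ _ _ _ hMfin hMproj hNfin hNproj
    constructor
    · -- injectivity
      intro g₁ g₂ hg
      obtain ⟨nN, πN, σN, hπσN⟩ := exists_presentation hNfin hNproj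
      have hann : ∀ y : A, (∀ (p : V →ₗ[Aᵐᵒᵖ] A) (v : V), p v * y = 0) → y = 0 := by
        intro y hy
        apply hfaithful
        intro v
        apply ev_injective hproj
        intro p
        rw [map_smul, MulOpposite.smul_eq_mul_unop, unop_op]
        exact hy p v
      ext m
      have hfv : ∀ (v : V) (p : V →ₗ[Aᵐᵒᵖ] A), g₁ (p v • m) = g₂ (p v • m) := by
        intro v p
        let fv : (V →ₗ[Aᵐᵒᵖ] A) →ₗ[A] M :=
          { toFun := fun q => q v • m
            map_add' := fun q q' => by simp [add_smul]
            map_smul' := fun a q => by simp [LinearMap.smul_apply, smul_assoc, mul_smul] }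
        have h2 := congrFun hg fv
        exact LinearMap.congr_fun h2 p
      have hd : ∀ (v : V) (p : V →ₗ[Aᵐᵒᵖ] A), p v • (g₁ m - g₂ m) = 0 := by
        intro v p
        rw [smul_sub, ← map_smul, ← map_smul, hfv v p, sub_self]
      have hco : σN (g₁ m - g₂ m) = 0 := by
        funext j
        have hterm : ∀ (p : V →ₗ[Aᵐᵒᵖ] A) (v : V), p v * σN (g₁ m - g₂ m) j = 0 := by
          intro p v
          have h2 : p v • σN (g₁ m - g₂ m) = 0 := by
            rw [← map_smul, hd v p, map_zero]
          have h3 := congrFun h2 j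
          simpa [smul_eq_mul] using h3
        exact hann _ hterm
      have h4 : g₁ m - g₂ m = 0 := by
        rw [← hπσN (g₁ m - g₂ m), hco, map_zero]
      exact sub_eq_zero.mp h4
    · -- surjectivity
      intro Φ hadd hcomp
      obtain ⟨mM, πM, σM, hπσM⟩ := exists_presentation hMfin hMproj
      obtain ⟨nN, πN, σN, hπσN⟩ := exists_presentation hNfin hNproj
      set ΦH : ((V →ₗ[Aᵐᵒᵖ] A) →ₗ[A] M) →+ ((V →ₗ[Aᵐᵒᵖ] A) →ₗ[A] N) :=
        AddMonoidHom.mk' Φ hadd with hΦH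
      have key : ∀ (i : Fin mM) (j : Fin nN), ∃ a : A,
          ∀ f0 : (V →ₗ[Aᵐᵒᵖ] A) →ₗ[A] A,
            (LinearMap.proj j : (Fin nN → A) →ₗ[A] A) ∘ₗ (σN ∘ₗ
              Φ (πM ∘ₗ (LinearMap.single A (fun _ => A) i) ∘ₗ f0))
            = LinearMap.toSpanSingleton A A a ∘ₗ f0 := by
        intro i j
        apply coreSurj k hfaithful hproj hinj hdom
        · intro f₁ f₂
          have h1 : πM ∘ₗ LinearMap.single A (fun _ => A) i ∘ₗ (f₁ + f₂)
              = (πM ∘ₗ LinearMap.single A (fun _ => A) i ∘ₗ f₁)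
                + (πM ∘ₗ LinearMap.single A (fun _ => A) i ∘ₗ f₂) := by
            ext p; simp [Pi.single_add]
          rw [h1, hadd]
          ext p; simp
        · intro f0 g0
          have h1 : πM ∘ₗ LinearMap.single A (fun _ => A) i ∘ₗ (f0 ∘ₗ g0)
              = (πM ∘ₗ LinearMap.single A (fun _ => A) i ∘ₗ f0) ∘ₗ g0 := by
            ext p; rfl
          rw [h1, hcomp]
          ext p; rfl
      choose a ha using key
      set G0 : (Fin mM → A) →ₗ[A] (Fin nN → A) :=
        LinearMap.pi (fun j => ∑ i, LinearMap.toSpanSingleton A A (a i j)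
          ∘ₗ (LinearMap.proj i : (Fin mM → A) →ₗ[A] A)) with hG0
      refine ⟨πN ∘ₗ G0 ∘ₗ σM, fun f => ?_⟩
      have hdecomp : f = ∑ i, (πM ∘ₗ LinearMap.single A (fun _ => A) i ∘ₗ
          ((LinearMap.proj i : (Fin mM → A) →ₗ[A] A) ∘ₗ (σM ∘ₗ f))) := by
        ext p
        rw [LinearMap.sum_apply]
        conv_lhs => rw [← hπσM (f p), ← Finset.univ_sum_single (σM (f p)), map_sum]
        exact Finset.sum_congr rfl fun i _ => rfl
      have h1 : Φ f = ∑ i, Φ (πM ∘ₗ LinearMap.single A (fun _ => A) i ∘ₗ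
          ((LinearMap.proj i : (Fin mM → A) →ₗ[A] A) ∘ₗ (σM ∘ₗ f))) := by
        conv_lhs => rw [hdecomp]
        exact map_sum ΦH _ _
      ext p
      have h2 : σN (Φ f p) = G0 (σM (f p)) := by
        funext j
        have h3 : σN (Φ f p) j = ∑ i, σN (Φ (πM ∘ₗ LinearMap.single A (fun _ => A) i ∘ₗ
            ((LinearMap.proj i : (Fin mM → A) →ₗ[A] A) ∘ₗ (σM ∘ₗ f))) p) j := by
          rw [h1]
          simp [LinearMap.sum_apply, map_sum, Finset.sum_apply]
        rw [h3]
        have h4 : ∀ i : Fin mM, σN (Φ (πM ∘ₗ LinearMap.single A (fun _ => A) i ∘ₗ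
            ((LinearMap.proj i : (Fin mM → A) →ₗ[A] A) ∘ₗ (σM ∘ₗ f))) p) j
            = σM (f p) i * a i j := by
          intro i
          have h5 := LinearMap.congr_fun
            (ha i j ((LinearMap.proj i : (Fin mM → A) →ₗ[A] A) ∘ₗ (σM ∘ₗ f))) p
          simpa [LinearMap.toSpanSingleton_apply, smul_eq_mul] using h5
        rw [Finset.sum_congr rfl fun i _ => h4 i]
        simp [hG0, LinearMap.pi_apply, LinearMap.sum_apply,
          LinearMap.toSpanSingleton_apply, smul_eq_mul]
      calc Φ f p = πN (σN (Φ f p)) := (hπσN _).symm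
        _ = πN (G0 (σM (f p))) := by rw [h2]
        _ = ((πN ∘ₗ G0 ∘ₗ σM) ∘ₗ f) p := rfl
  · -- the ring isomorphism
    have evadd : ∀ v v' : V, evA (A := A) (v + v') = evA v + evA v' := by
      intro v v'; ext p; simp
    set evH : V →+ ((V →ₗ[Aᵐᵒᵖ] A) →ₗ[A] A) := AddMonoidHom.mk' (evA (A := A)) evadd with hevH
    have hbij : Function.Bijective evH := by
      constructor
      · intro v v' hvv'
        have h0 : ∀ p : V →ₗ[Aᵐᵒᵖ] A, p (v - v') = 0 := by
          intro p
          have h1 := LinearMap.congr_fun hvv' p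
          simp only [hevH, AddMonoidHom.mk'_apply, evA_apply] at h1
          rw [map_sub, h1, sub_self]
        exact sub_eq_zero.mp (ev_injective hproj _ h0)
      · intro F
        obtain ⟨v, hv⟩ := ev_surjective hproj F
        exact ⟨v, by ext p; exact hv p⟩
    set E : V ≃+ ((V →ₗ[Aᵐᵒᵖ] A) →ₗ[A] A) := AddEquiv.ofBijective evH hbij with hE
    have hEapp : ∀ (v : V) (p : V →ₗ[Aᵐᵒᵖ] A), E v p = p v := fun v p => rfl
    have hEdual : ∀ (h : V →ₗ[Aᵐᵒᵖ] V) (v : V), E (h v) = E v ∘ₗ dualM h := by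
      intro h v; ext p; rfl
    have hsm : ∀ (c : Aᵐᵒᵖ) (x : V),
        E (c • x) = LinearMap.toSpanSingleton A A (unop c) ∘ₗ E x := by
      intro c x; ext p
      rw [hEapp, map_smul, MulOpposite.smul_eq_mul_unop]
      simp [LinearMap.toSpanSingleton_apply, smul_eq_mul, hEapp]
    let toEndFun : (Module.End A (V →ₗ[Aᵐᵒᵖ] A)) → Module.End Aᵐᵒᵖ V := fun g =>
      { toFun := fun v => E.symm (E v ∘ₗ g)
        map_add' := fun v w => by
          show E.symm (E (v + w) ∘ₗ g) = E.symm (E v ∘ₗ g) + E.symm (E w ∘ₗ g)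
          rw [map_add, LinearMap.add_comp, map_add]
        map_smul' := fun c v => by
          simp only [RingHom.id_apply]
          apply E.injective
          rw [E.apply_symm_apply, hsm, hsm, E.apply_symm_apply, LinearMap.comp_assoc] }
    have htoEndFun : ∀ g v, toEndFun g v = E.symm (E v ∘ₗ g) := fun g v => rfl
    let Ehom : (Module.End A (V →ₗ[Aᵐᵒᵖ] A))ᵐᵒᵖ →+* Module.End Aᵐᵒᵖ V :=
      { toFun := fun og => toEndFun og.unop
        map_one' := by
          ext v
          rw [htoEndFun]
          show E.symm (E v ∘ₗ LinearMap.id) = v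
          rw [LinearMap.comp_id, E.symm_apply_apply]
        map_mul' := fun og₁ og₂ => by
          ext v
          rw [Module.End.mul_apply, htoEndFun, htoEndFun, htoEndFun]
          show E.symm (E v ∘ₗ (unop og₂ * unop og₁))
            = E.symm (E (E.symm (E v ∘ₗ unop og₂)) ∘ₗ unop og₁)
          rw [E.apply_symm_apply, Module.End.mul_eq_comp, ← LinearMap.comp_assoc]
        map_zero' := by
          ext v
          rw [htoEndFun]
          show E.symm (E v ∘ₗ (0 : Module.End A (V →ₗ[Aᵐᵒᵖ] A))) = 0
          rw [LinearMap.comp_zero]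
          simp
        map_add' := fun og₁ og₂ => by
          ext v
          rw [LinearMap.add_apply, htoEndFun, htoEndFun, htoEndFun]
          show E.symm (E v ∘ₗ (unop og₁ + unop og₂)) = _
          rw [LinearMap.comp_add, map_add] }
    have hEhom : ∀ og, Ehom og = toEndFun og.unop := fun og => rfl
    have hEhombij : Function.Bijective Ehom := by
      constructor
      · intro og₁ og₂ h
        apply MulOpposite.unop_injective
        ext p v
        have h1 : toEndFun (unop og₁) v = toEndFun (unop og₂) v := by rw [← hEhom, ← hEhom, h]
        rw [htoEndFun, htoEndFun] at h1
        have h2 : E v ∘ₗ unop og₁ = E v ∘ₗ unop og₂ := E.symm.injective h1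
        have h3 := LinearMap.congr_fun h2 p
        simpa [hEapp] using h3
      · intro h
        refine ⟨op (dualM h), ?_⟩
        ext v
        rw [hEhom, unop_op, htoEndFun, ← hEdual, E.symm_apply_apply]
    refine ⟨RingEquiv.ofBijective Ehom hEhombij, fun c g => ?_⟩
    ext v
    show toEndFun (unop (op (c • g))) v = (c • toEndFun (unop (op g))) v
    rw [unop_op, unop_op, LinearMap.smul_apply, htoEndFun, htoEndFun]
    apply E.injective
    rw [E.apply_symm_apply]
    have hkE : ∀ (x : V), E (c • x) = c • E x := by
      intro x; ext p
      rw [hEapp, LinearMap.smul_apply, hEapp]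
      rw [← algebraMap_smul Aᵐᵒᵖ c x, map_smul, MulOpposite.algebraMap_apply,
        MulOpposite.smul_eq_mul_unop, unop_op, Algebra.smul_def]
      exact (Algebra.commutes c (p x)).symm
    rw [hkE, E.apply_symm_apply]
    ext p
    rw [LinearMap.smul_apply, LinearMap.comp_apply, LinearMap.comp_apply, LinearMap.smul_apply,
      hEapp, hEapp, LinearMap.smul_apply]
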